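/- arXiv:1801.10483 — 3 statements merged into one kernel-verified Lean document; each statement's English description precedes it below -/
import Mathlib

section
/- If a Boolean function f : {0,1}^n → {0,1} is computed by a shuffling two-way deterministic automaton 2DA^Θ_n of size d (for some permutation θ of {1,…,n}), then N(f) ≤ (d+1)^{d+1}. -/
/-! ## Basic machinery for nonuniform two-way automata -/

/-- Head directions: left, stay, right. -/
inductive Dir : Type
  | L | S | R
  deriving DecidableEq

instance : Fintype Dir :=
  ⟨{Dir.L, Dir.S, Dir.R}, fun x => by cases x <;> simp⟩

/-- Move a head position (0-based tape square) in a direction. -/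
def movePos (p : ℕ) : Dir → ℕ
  | Dir.L => p - 1
  | Dir.S => p
  | Dir.R => p + 1

/-- Read the bit of an input of length `n` at (0-based) position `p`
(dummy value `false` out of range; well-formed machines never read out of range). -/
def readBit {n : ℕ} (u : Fin n → Bool) (p : ℕ) : Bool :=
  if h : p < n then u ⟨p, h⟩ else false

/-- A nonuniform head-position-dependent two-way deterministic automaton `2DA_n`
with `d` states, for inputs of length `n`.  The input is on (0-based) squares
`0, …, n-1`; the transition function may differ on each square; the head never
leaves the input; the accepting/rejecting states can only be entered when
reading the rightmost square. -/
structure TwoDA (n d : ℕ) where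
  start : Fin d
  acc : Fin d
  rej : Fin d
  acc_ne_rej : acc ≠ rej
  δ : ℕ → Fin d → Bool → Fin d × Dir
  noLeft : ∀ s b, (δ 0 s b).2 ≠ Dir.L
  noRight : ∀ s b, (δ (n - 1) s b).2 ≠ Dir.R
  haltRight : ∀ i s b, i < n → i ≠ n - 1 → (δ i s b).1 ≠ acc ∧ (δ i s b).1 ≠ rej

namespace TwoDA

variable {n d : ℕ}

/-- One computation step on input `u`; configurations are (state, head position),
and halting configurations are absorbing. -/
def step (M : TwoDA n d) (u : Fin n → Bool) (c : Fin d × ℕ) : Fin d × ℕ :=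
  if c.1 = M.acc ∨ c.1 = M.rej then c
  else ((M.δ c.2 c.1 (readBit u c.2)).1, movePos c.2 (M.δ c.2 c.1 (readBit u c.2)).2)

/-- The machine accepts `u` if the run from the initial configuration reaches the
accepting state. -/
def accepts (M : TwoDA n d) (u : Fin n → Bool) : Prop :=
  ∃ t : ℕ, ((M.step u)^[t] (M.start, 0)).1 = M.acc

def rejects (M : TwoDA n d) (u : Fin n → Bool) : Prop :=
  ∃ t : ℕ, ((M.step u)^[t] (M.start, 0)).1 = M.rej

/-- A `2DA_n` computes `f` if it accepts each `u` with `f u = true` and rejects each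
`u` with `f u = false`. -/
def Computes (M : TwoDA n d) (f : (Fin n → Bool) → Bool) : Prop :=
  ∀ u, (f u = true → M.accepts u) ∧ (f u = false → M.rejects u)

/-- A shuffling automaton `2DA^Θ_n` computes `f`: for some permutation `θ`, the `j`-th
input symbol is placed on square `θ(j)` and the `2DA_n` computes the resulting function. -/
def ComputesShuffled (M : TwoDA n d) (f : (Fin n → Bool) → Bool) : Prop :=
  ∃ θ : Equiv.Perm (Fin n), M.Computes (fun v => f (fun j => v (θ j)))

end TwoDA

/-- The nondeterministic counterpart `2NA_n` of `2DA_n`. -/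
structure TwoNA (n d : ℕ) where
  start : Fin d
  acc : Fin d
  rej : Fin d
  acc_ne_rej : acc ≠ rej
  δ : ℕ → Fin d → Bool → Set (Fin d × Dir)
  noLeft : ∀ s b r, r ∈ δ 0 s b → r.2 ≠ Dir.L
  noRight : ∀ s b r, r ∈ δ (n - 1) s b → r.2 ≠ Dir.R
  haltRight : ∀ i s b r, i < n → i ≠ n - 1 → r ∈ δ i s b → r.1 ≠ acc ∧ r.1 ≠ rej

namespace TwoNA

variable {n d : ℕ}

/-- One nondeterministic step. -/
def stepRel (M : TwoNA n d) (u : Fin n → Bool) (c c' : Fin d × ℕ) : Prop :=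
  c.1 ≠ M.acc ∧ c.1 ≠ M.rej ∧
    ∃ r ∈ M.δ c.2 c.1 (readBit u c.2), c' = (r.1, movePos c.2 r.2)

/-- Acceptance: some computation path reaches the accepting state. -/
def accepts (M : TwoNA n d) (u : Fin n → Bool) : Prop :=
  ∃ p : ℕ, Relation.ReflTransGen (M.stepRel u) (M.start, 0) (M.acc, p)

/-- A `2NA_n` computes `f` if it accepts exactly the inputs `u` with `f u = true`. -/
def Computes (M : TwoNA n d) (f : (Fin n → Bool) → Bool) : Prop :=
  ∀ u, M.accepts u ↔ f u = true

def ComputesShuffled (M : TwoNA n d) (f : (Fin n → Bool) → Bool) : Prop :=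
  ∃ θ : Equiv.Perm (Fin n), M.Computes (fun v => f (fun j => v (θ j)))

end TwoNA

/-- The probabilistic counterpart `2PA_n`: every transition carries a probability, and
from each non-halting configuration the outgoing probabilities sum to `1`. -/
structure TwoPA (n d : ℕ) where
  start : Fin d
  acc : Fin d
  rej : Fin d
  acc_ne_rej : acc ≠ rej
  δ : ℕ → Fin d → Bool → Fin d × Dir → ENNReal
  sum_one : ∀ i s b, ∑ r : Fin d × Dir, δ i s b r = 1
  noLeft : ∀ s b r, δ 0 s b r ≠ 0 → r.2 ≠ Dir.L
  noRight : ∀ s b r, δ (n - 1) s b r ≠ 0 → r.2 ≠ Dir.R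
  haltRight : ∀ i s b r, i < n → i ≠ n - 1 → δ i s b r ≠ 0 → r.1 ≠ acc ∧ r.1 ≠ rej

namespace TwoPA

variable {n d : ℕ}

/-- One-step transition probability of the Markov chain on configurations
(halting configurations are absorbing). -/
noncomputable def transP (M : TwoPA n d) (u : Fin n → Bool) (c c' : Fin d × ℕ) : ENNReal :=
  if c.1 = M.acc ∨ c.1 = M.rej then (if c' = c then 1 else 0)
  else ∑ r : Fin d × Dir,
    if c' = (r.1, movePos c.2 r.2) then M.δ c.2 c.1 (readBit u c.2) r else 0

/-- Distribution over configurations after `t` steps. -/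
noncomputable def dist (M : TwoPA n d) (u : Fin n → Bool) : ℕ → (Fin d × ℕ) → ENNReal
  | 0 => fun c => if c = (M.start, 0) then 1 else 0
  | t + 1 => fun c' => ∑' c : Fin d × ℕ, M.dist u t c * M.transP u c c'

/-- The probability of eventually halting in the accepting state. -/
noncomputable def accProb (M : TwoPA n d) (u : Fin n → Bool) : ENNReal :=
  ⨆ t : ℕ, ∑' p : ℕ, M.dist u t (M.acc, p)

/-- The probability of eventually halting in the rejecting state. -/
noncomputable def rejProb (M : TwoPA n d) (u : Fin n → Bool) : ENNReal :=
  ⨆ t : ℕ, ∑' p : ℕ, M.dist u t (M.rej, p)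

/-- The expected running time (number of steps until halting):
`E[τ] = ∑_t P(τ > t)`. -/
noncomputable def expTime (M : TwoPA n d) (u : Fin n → Bool) : ENNReal :=
  ∑' t : ℕ, (1 - (∑' p : ℕ, M.dist u t (M.acc, p)) - (∑' p : ℕ, M.dist u t (M.rej, p)))

/-- A `2PA_n` computes `f` with error probability `ε`:
members of `f⁻¹(1)` are accepted and members of `f⁻¹(0)` rejected
with probability at least `1/2 + ε`. -/
def Computes (M : TwoPA n d) (f : (Fin n → Bool) → Bool) (ε : ℝ) : Prop :=
  ∀ u, (f u = true → ENNReal.ofReal (1 / 2 + ε) ≤ M.accProb u) ∧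
       (f u = false → ENNReal.ofReal (1 / 2 + ε) ≤ M.rejProb u)

def ComputesShuffled (M : TwoPA n d) (f : (Fin n → Bool) → Bool) (ε : ℝ) : Prop :=
  ∃ θ : Equiv.Perm (Fin n), M.Computes (fun v => f (fun j => v (θ j))) ε

end TwoPA

/-! ## Subfunctions and the complexity measure `N(f)` -/

/-- Assemble a full input from: a permutation `θ` (so that the variable at the `k`-th
position of the order is `x_{θ(k)}`), an assignment `ρ` to the first `i` variables of
the order, and values `γ` for the remaining `n - i` variables. -/
def assembleInput {n : ℕ} (θ : Equiv.Perm (Fin n)) (i : ℕ) (ρ : Fin i → Bool)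
    (γ : Fin (n - i) → Bool) : Fin n → Bool := fun j =>
  if h : (θ.symm j : ℕ) < i then ρ ⟨(θ.symm j : ℕ), h⟩
  else γ ⟨(θ.symm j : ℕ) - i, by have := (θ.symm j).isLt; omega⟩

/-- `N_i^θ(f)`: the number of distinct subfunctions of `f` obtained by fixing the first
`i` variables (in the order given by `θ`). -/
noncomputable def subfunCount (n : ℕ) (f : (Fin n → Bool) → Bool)
    (θ : Equiv.Perm (Fin n)) (i : ℕ) : ℕ :=
  Set.ncard { g : (Fin (n - i) → Bool) → Bool |
    ∃ ρ : Fin i → Bool, g = fun γ => f (assembleInput θ i ρ γ) }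

/-- `N^θ(f) = max_{1 ≤ i ≤ n-1} N_i^θ(f)`. -/
noncomputable def Nperm (n : ℕ) (f : (Fin n → Bool) → Bool) (θ : Equiv.Perm (Fin n)) : ℕ :=
  (Finset.Icc 1 (n - 1)).sup (subfunCount n f θ)

/-- `N(f) = min_θ N^θ(f)`. -/
noncomputable def Nsub (n : ℕ) (f : (Fin n → Bool) → Bool) : ℕ :=
  ⨅ θ : Equiv.Perm (Fin n), Nperm n f θ

/-! ## Languages: the measure `R_n(L)` -/

/-- `R^r(L_n)`: the number of equivalence classes of strings of length `r`, where
`u ∼ v` iff `u·y ∈ L ↔ v·y ∈ L` for all `y` of length `n - r`; counted as the number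
of distinct "extension behaviours". -/
noncomputable def Rr (L : Set (List Bool)) (n r : ℕ) : ℕ :=
  Set.ncard { g : { y : List Bool // y.length = n - r } → Prop |
    ∃ u : List Bool, u.length = r ∧ g = fun y => (u ++ y.1) ∈ L }

/-- `R_n(L) = max_{1 ≤ r ≤ n-1} R^r(L_n)`. -/
noncomputable def Rn (L : Set (List Bool)) (n : ℕ) : ℕ :=
  (Finset.Icc 1 (n - 1)).sup (Rr L n)

/-! ## Uniform two-way automata (2DFA / 2NFA) -/

/-- Tape alphabet of a uniform two-way automaton: end-markers and input bits. -/
inductive TapeSym : Type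
  | lend | rend | bit (b : Bool)
  deriving DecidableEq

/-- The tape of input `w` between end-markers: square `0` holds `⊢`, squares
`1, …, |w|` hold the input, square `|w|+1` holds `⊣`. -/
def tapeSym (w : List Bool) (p : ℕ) : TapeSym :=
  if p = 0 then TapeSym.lend
  else if h : p - 1 < w.length then TapeSym.bit (w.get ⟨p - 1, h⟩) else TapeSym.rend

/-- A uniform two-way deterministic finite automaton (2DFA) with `d` states. -/
structure TwoDFA (d : ℕ) where
  start : Fin d
  acc : Fin d
  rej : Fin d
  acc_ne_rej : acc ≠ rej
  δ : Fin d → TapeSym → Fin d × Dir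

namespace TwoDFA

variable {d : ℕ}

def step (M : TwoDFA d) (w : List Bool) (c : Fin d × ℕ) : Fin d × ℕ :=
  if c.1 = M.acc ∨ c.1 = M.rej then c
  else ((M.δ c.1 (tapeSym w c.2)).1, movePos c.2 (M.δ c.1 (tapeSym w c.2)).2)

def accepts (M : TwoDFA d) (w : List Bool) : Prop :=
  ∃ t : ℕ, ((M.step w)^[t] (M.start, 0)).1 = M.acc

def rejects (M : TwoDFA d) (w : List Bool) : Prop :=
  ∃ t : ℕ, ((M.step w)^[t] (M.start, 0)).1 = M.rej

/-- A 2DFA recognizes `L` if it accepts every member and rejects every non-member. -/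
def Recognizes (M : TwoDFA d) (L : Set (List Bool)) : Prop :=
  ∀ w, (w ∈ L → M.accepts w) ∧ (w ∉ L → M.rejects w)

end TwoDFA

/-- A uniform two-way nondeterministic finite automaton (2NFA) with `d` states. -/
structure TwoNFA (d : ℕ) where
  start : Fin d
  acc : Fin d
  rej : Fin d
  acc_ne_rej : acc ≠ rej
  δ : Fin d → TapeSym → Set (Fin d × Dir)

namespace TwoNFA

variable {d : ℕ}

def stepRel (M : TwoNFA d) (w : List Bool) (c c' : Fin d × ℕ) : Prop :=
  c.1 ≠ M.acc ∧ c.1 ≠ M.rej ∧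
    ∃ r ∈ M.δ c.1 (tapeSym w c.2), c' = (r.1, movePos c.2 r.2)

def accepts (M : TwoNFA d) (w : List Bool) : Prop :=
  ∃ p : ℕ, Relation.ReflTransGen (M.stepRel w) (M.start, 0) (M.acc, p)

/-- A 2NFA recognizes `L` if it accepts exactly the members of `L`. -/
def Recognizes (M : TwoNFA d) (L : Set (List Bool)) : Prop :=
  ∀ w, M.accepts w ↔ w ∈ L

end TwoNFA

/-! ## Size classes -/

/-- A family of Boolean functions, one for each input length. -/
abbrev BoolFamily : Type := (n : ℕ) → (Fin n → Bool) → Bool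

/-- `2DSIZE(d(n))`. -/
def DSIZE (df : ℕ → ℕ) : Set BoolFamily :=
  { f | ∀ n, ∃ dn ≤ df n, ∃ M : TwoDA n dn, M.Computes (f n) }

/-- `2DΘSIZE(d(n))`. -/
def DSIZEΘ (df : ℕ → ℕ) : Set BoolFamily :=
  { f | ∀ n, ∃ dn ≤ df n, ∃ M : TwoDA n dn, M.ComputesShuffled (f n) }

/-- `2NSIZE(d(n))`. -/
def NSIZE (df : ℕ → ℕ) : Set BoolFamily :=
  { f | ∀ n, ∃ dn ≤ df n, ∃ M : TwoNA n dn, M.Computes (f n) }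

/-- `2NΘSIZE(d(n))`. -/
def NSIZEΘ (df : ℕ → ℕ) : Set BoolFamily :=
  { f | ∀ n, ∃ dn ≤ df n, ∃ M : TwoNA n dn, M.ComputesShuffled (f n) }

/-- `2PSIZE(d(n))`, with error bound `ε` and expected running time at most `T` on
every input. -/
def PSIZE (df : ℕ → ℕ) (ε T : ℝ) : Set BoolFamily :=
  { f | ∀ n, ∃ dn ≤ df n, ∃ M : TwoPA n dn,
      M.Computes (f n) ε ∧ ∀ u, M.expTime u ≤ ENNReal.ofReal T }

/-- `2PΘSIZE(d(n))`, with error bound `ε` and expected running time at most `T` on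
every input. -/
def PSIZEΘ (df : ℕ → ℕ) (ε T : ℝ) : Set BoolFamily :=
  { f | ∀ n, ∃ dn ≤ df n, ∃ M : TwoPA n dn,
      M.ComputesShuffled (f n) ε ∧ ∀ u, M.expTime u ≤ ENNReal.ofReal T }

/-- `2DFASIZE(d(n))`: for each length `n`, a 2DFA with at most `d(n)` states decides
membership of the length-`n` strings. -/
def DFASIZE (df : ℕ → ℕ) : Set (Set (List Bool)) :=
  { L | ∀ n, ∃ dn ≤ df n, ∃ M : TwoDFA dn,
      ∀ w : List Bool, w.length = n → ((w ∈ L → M.accepts w) ∧ (w ∉ L → M.rejects w)) }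

/-- `2NFASIZE(d(n))`. -/
def NFASIZE (df : ℕ → ℕ) : Set (Set (List Bool)) :=
  { L | ∀ n, ∃ dn ≤ df n, ∃ M : TwoNFA dn,
      ∀ w : List Bool, w.length = n → (M.accepts w ↔ w ∈ L) }
/-! ## The shuffled address function `2-SAF_t` and its uniform version -/

namespace SAF

/-- Number of variables in each of the `2t` blocks. -/
def q (n t : ℕ) : ℕ := n / (2 * t)

/-- Number of address variables per block: `⌈log₂ 2t⌉`. -/
def c (t : ℕ) : ℕ := Nat.clog 2 (2 * t)

/-- Number of value variables per block. -/
def b (n t : ℕ) : ℕ := q n t - c t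

/-- Given the per-block address function `Adr` and per-block value function `BVal`,
`Ind` finds the minimal block whose address is `a`, and `mkVal a` is the value of
that block (or `none` if no block has address `a`). -/
def mkVal (t : ℕ) (Adr BVal : ℕ → ℕ) (a : ℕ) : Option ℕ :=
  ((List.range (2 * t)).find? (fun p => Adr p == a)).map BVal

/-- The two-round iteration of the address function:
`Step_2(X,-1) = 2`; `Step_1(X,i) = Val(X, Step_2(X,i-1)) + t`;
`Step_2(X,i) = Val(X, Step_1(X,i))`; result `1` iff `Step_2(X,1) > 0`
(`none`, representing `-1`, gives result `0`). -/
def iterate (t : ℕ) (Val : ℕ → Option ℕ) : Bool :=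
  match ((((Val 2).map (· + t)).bind Val).bind (fun a => (Val a).map (· + t))).bind Val with
  | some v => decide (0 < v)
  | none => false

/-- `Adr(X,p) = (∑_{j<c} y^p_j 2^j) mod 2t`, where the address variables of block `p`
are the first `c` variables of the block. -/
def Adr (n t : ℕ) (X : Fin n → Bool) (p : ℕ) : ℕ :=
  (∑ j ∈ Finset.range (c t), (if readBit X (p * q n t + j) then 2 ^ j else 0)) % (2 * t)

/-- The value of block `p`: the number of `1`s among its value variables, mod `t`. -/
def blockVal (n t : ℕ) (X : Fin n → Bool) (p : ℕ) : ℕ :=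
  (∑ j ∈ Finset.range (b n t), (if readBit X (p * q n t + c t + j) then 1 else 0)) % t

/-- `Val(X,a)`: value of the first block with address `a` (`none` meaning `-1`). -/
def Val (n t : ℕ) (X : Fin n → Bool) : ℕ → Option ℕ :=
  mkVal t (Adr n t X) (blockVal n t X)

end SAF

/-- The Boolean function `2-SAF_t` on `n` variables. -/
def SAFfun (n t : ℕ) (X : Fin n → Bool) : Bool :=
  SAF.iterate t (SAF.Val n t X)

/-- The set of value variables of block `p` (for the `2-SAF_t` layout) inside a set
`A` of variables. -/
def SAF.valueVarsIn (n t : ℕ) (p : ℕ) (A : Finset (Fin n)) : Finset (Fin n) :=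
  A.filter (fun x => p * q n t + c t ≤ (x : ℕ) ∧ (x : ℕ) < p * q n t + q n t)

/-- The blocks from which `A` contains at least `t` value variables. -/
def SAF.heavyBlocks (n t : ℕ) (A : Finset (Fin n)) : Finset ℕ :=
  (Finset.range (2 * t)).filter (fun p => t ≤ (valueVarsIn n t p A).card)

namespace USAF

/-- The data (non-mark) bits of block `p`, as (mark, data) pairs: within a block the
variables in odd (1-based) positions are mark bits, each followed by a data bit. -/
def dataPairs (n t : ℕ) (X : Fin n → Bool) (p : ℕ) : List (Bool × Bool) :=
  (List.range (SAF.q n t / 2)).map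
    (fun j => (readBit X (p * SAF.q n t + 2 * j), readBit X (p * SAF.q n t + 2 * j + 1)))

/-- The address bits of block `p`: data bits whose mark bit is `0`, in order. -/
def addrBits (n t : ℕ) (X : Fin n → Bool) (p : ℕ) : List Bool :=
  ((dataPairs n t X p).filter (fun pr => pr.1 == false)).map Prod.snd

/-- The value bits of block `p`: data bits whose mark bit is `1`, in order. -/
def valBits (n t : ℕ) (X : Fin n → Bool) (p : ℕ) : List Bool :=
  ((dataPairs n t X p).filter (fun pr => pr.1 == true)).map Prod.snd

/-- `Adr(X,p) = (∑_{j<c} y^p_j 2^{c-j-1}) mod 2t`, over the first `c` address bits. -/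
def Adr (n t : ℕ) (X : Fin n → Bool) (p : ℕ) : ℕ :=
  (∑ j ∈ Finset.range (SAF.c t),
      (if (addrBits n t X p).getD j false then 2 ^ (SAF.c t - j - 1) else 0)) % (2 * t)

/-- The value of block `p`: the number of `1`s among its value bits, mod `t`. -/
def blockVal (n t : ℕ) (X : Fin n → Bool) (p : ℕ) : ℕ :=
  ((valBits n t X p).count true) % t

def Val (n t : ℕ) (X : Fin n → Bool) : ℕ → Option ℕ :=
  SAF.mkVal t (Adr n t X) (blockVal n t X)

end USAF

/-- The Boolean function `2-USAF_t` on `n` variables. -/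
def USAFfun (n t : ℕ) (X : Fin n → Bool) : Bool :=
  SAF.iterate t (USAF.Val n t X)

/-- The language `2-USAF-L_t`: all binary strings `u` with `2-USAF_t(u) = 1`. -/
def USAFlang (t : ℕ) : Set (List Bool) :=
  { w : List Bool | USAFfun w.length t (fun i => w.get i) = true }

/-! ## The equality function -/

/-- `EQ(X) = 1` iff `x_i = x_{i + ⌊n/2⌋}` for every `0 ≤ i < ⌊n/2⌋`. -/
def EQfun (n : ℕ) (x : Fin n → Bool) : Bool :=
  decide (∀ i : ℕ, (h : i < n / 2) → x ⟨i, by omega⟩ = x ⟨i + n / 2, by omega⟩)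


/-! ## Auxiliary lemmas for STATEMENT 0 -/

namespace TwoDA

variable {n d : ℕ}

variable (M : TwoDA n d) {u u' : Fin n → Bool}

lemma pos_step_le (u : Fin n → Bool) (c : Fin d × ℕ) : (M.step u c).2 ≤ c.2 + 1 := by
  unfold step
  split
  · omega
  · cases h : (M.δ c.2 c.1 (readBit u c.2)).2 <;> simp [movePos, h] <;> omega

lemma pos_le_step (u : Fin n → Bool) (c : Fin d × ℕ) : c.2 ≤ (M.step u c).2 + 1 := by
  unfold step
  split
  · omega
  · cases h : (M.δ c.2 c.1 (readBit u c.2)).2 <;> simp [movePos, h] <;> omega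

lemma step_halt {c : Fin d × ℕ} (h : c.1 = M.acc ∨ c.1 = M.rej) (u : Fin n → Bool) :
    M.step u c = c := if_pos h

lemma step_congr {c : Fin d × ℕ} (h : readBit u c.2 = readBit u' c.2) :
    M.step u c = M.step u' c := by simp only [step, h]

lemma run_eq_of_lt {i : ℕ} (hpre : ∀ p, p < i → readBit u p = readBit u' p)
    (c : Fin d × ℕ) :
    ∀ t, (∀ t' < t, ((M.step u)^[t'] c).2 < i) →
      (M.step u)^[t] c = (M.step u')^[t] c := by
  intro t
  induction t with
  | zero => intro _; rfl
  | succ t ih =>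
    intro H
    have he : (M.step u)^[t] c = (M.step u')^[t] c :=
      ih (fun t' ht' => H t' (ht'.trans (Nat.lt_succ_self t)))
    rw [Function.iterate_succ_apply', Function.iterate_succ_apply', ← he]
    exact M.step_congr (hpre _ (H t (Nat.lt_succ_self t)))

open Classical in
noncomputable def texit (u : Fin n → Bool) (i : ℕ) (c : Fin d × ℕ) : Option (Fin d) :=
  if h : ∃ t, i ≤ ((M.step u)^[t] c).2 then some (((M.step u)^[Nat.find h] c).1) else none

lemma texit_congr {i : ℕ} (hpre : ∀ p, p < i → readBit u p = readBit u' p)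
    {c : Fin d × ℕ} (hc : c.2 < i) : M.texit u i c = M.texit u' i c := by
  by_cases h : ∃ t, i ≤ ((M.step u)^[t] c).2
  · set t₀ := Nat.find h with ht₀
    have hlt : ∀ t' < t₀, ((M.step u)^[t'] c).2 < i := fun t' ht' =>
      Nat.lt_of_not_le (Nat.find_min h ht')
    have heq : ∀ t ≤ t₀, (M.step u)^[t] c = (M.step u')^[t] c := fun t ht =>
      M.run_eq_of_lt hpre c t (fun t' ht' => hlt t' (lt_of_lt_of_le ht' ht))
    have h' : ∃ t, i ≤ ((M.step u')^[t] c).2 :=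
      ⟨t₀, by rw [← heq t₀ le_rfl]; exact Nat.find_spec h⟩
    have hfind : Nat.find h' = t₀ := by
      rw [Nat.find_eq_iff]
      refine ⟨by rw [← heq t₀ le_rfl]; exact Nat.find_spec h, fun k hk => ?_⟩
      rw [← heq k hk.le]
      exact Nat.not_le.mpr (hlt k hk)
    rw [texit, texit, dif_pos h, dif_pos h', hfind, ← ht₀, heq t₀ le_rfl]
  · have hall : ∀ t, ((M.step u)^[t] c).2 < i := fun t =>
      Nat.lt_of_not_le (fun hle => h ⟨t, hle⟩)
    have h' : ¬ ∃ t, i ≤ ((M.step u')^[t] c).2 := by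
      rintro ⟨t, ht⟩
      rw [← M.run_eq_of_lt hpre c t (fun t' _ => hall t')] at ht
      exact absurd ht (Nat.not_le.mpr (hall t))
    rw [texit, texit, dif_neg h, dif_neg h']

lemma exit_spec {i : ℕ} {c : Fin d × ℕ} (hc : c.2 < i) (u : Fin n → Bool)
    (h : ∃ t, i ≤ ((M.step u)^[t] c).2) :
    ((M.step u)^[Nat.find h] c).2 = i := by
  have hspec := Nat.find_spec h
  rcases Nat.eq_zero_or_pos (Nat.find h) with h0 | h0
  · rw [h0] at hspec; simp at hspec; omega
  · obtain ⟨k, hk⟩ := Nat.exists_eq_succ_of_ne_zero (Nat.pos_iff_ne_zero.mp h0)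
    have hklt : ((M.step u)^[k] c).2 < i :=
      Nat.lt_of_not_le (Nat.find_min h (by omega))
    have h2 := M.pos_step_le u ((M.step u)^[k] c)
    rw [hk, Function.iterate_succ_apply'] at hspec ⊢
    exact le_antisymm (by omega) hspec

lemma state_ne_halt {i : ℕ} {c : Fin d × ℕ} (hn : 2 ≤ n) (hin : i ≤ n - 1)
    (hc1 : c.1 ≠ M.acc) (hc2 : c.1 ≠ M.rej) (u : Fin n → Bool) :
    ∀ t, (∀ t' < t, ((M.step u)^[t'] c).2 < i) →
      ((M.step u)^[t] c).1 ≠ M.acc ∧ ((M.step u)^[t] c).1 ≠ M.rej := by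
  intro t
  induction t with
  | zero => exact fun _ => ⟨hc1, hc2⟩
  | succ t ih =>
    intro H
    have hih := ih (fun t' ht' => H t' (ht'.trans (Nat.lt_succ_self t)))
    have hpos := H t (Nat.lt_succ_self t)
    rw [Function.iterate_succ_apply']
    set c' := (M.step u)^[t] c
    rw [step, if_neg (by tauto)]
    exact M.haltRight c'.2 c'.1 (readBit u c'.2) (by omega) (by omega)

lemma run_fixed {c : Fin d × ℕ} {t : ℕ} (u : Fin n → Bool)
    (h : ((M.step u)^[t] c).1 = M.acc ∨ ((M.step u)^[t] c).1 = M.rej) (k : ℕ) :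
    (M.step u)^[t + k] c = (M.step u)^[t] c := by
  rw [add_comm, Function.iterate_add_apply]
  exact Function.iterate_fixed (M.step_halt h u) k

lemma not_accepts_and_rejects (u : Fin n → Bool) : ¬ (M.accepts u ∧ M.rejects u) := by
  rintro ⟨⟨t, ht⟩, ⟨t', ht'⟩⟩
  rcases le_total t t' with h | h
  · have := M.run_fixed u (Or.inl ht) (t' - t)
    rw [Nat.add_sub_cancel' h] at this
    rw [this] at ht'
    exact M.acc_ne_rej (ht ▸ ht')
  · have := M.run_fixed u (Or.inr ht') (t - t')
    rw [Nat.add_sub_cancel' h] at this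
    rw [this] at ht
    exact M.acc_ne_rej (ht ▸ ht')

end TwoDA

namespace TwoDA

variable {n d : ℕ} (M : TwoDA n d) {u u' : Fin n → Bool} {i : ℕ}

lemma cross (hn : 2 ≤ n) (hin : i ≤ n - 1) {c : Fin d × ℕ}
    (hc : c.2 < i) (hch1 : c.1 ≠ M.acc) (hch2 : c.1 ≠ M.rej)
    (htc : M.texit u i c = M.texit u' i c)
    {T : ℕ} (hT : ((M.step u)^[T] c).1 = M.acc)
    (hcont : ∀ T', T' ≤ T → ∀ c' : Fin d × ℕ, i ≤ c'.2 →
      ((M.step u)^[T'] c').1 = M.acc → ∃ t, ((M.step u')^[t] c').1 = M.acc) :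
    ∃ t, ((M.step u')^[t] c).1 = M.acc := by
  have hex : ∃ t, i ≤ ((M.step u)^[t] c).2 := by
    by_contra h
    push_neg at h
    exact (M.state_ne_halt hn hin hch1 hch2 u T (fun t' _ => h t')).1 hT
  have hpos0 : ((M.step u)^[Nat.find hex] c).2 = i := M.exit_spec hc u hex
  have ht₀ : Nat.find hex ≤ T := by
    by_contra h
    push_neg at h
    exact (M.state_ne_halt hn hin hch1 hch2 u T
      (fun t' ht' => Nat.lt_of_not_le (Nat.find_min hex (ht'.trans h)))).1 hT
  set e := (M.step u)^[Nat.find hex] c with he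
  have hrem : ((M.step u)^[T - Nat.find hex] e).1 = M.acc := by
    rw [he, ← Function.iterate_add_apply, Nat.sub_add_cancel ht₀]
    exact hT
  obtain ⟨t₂, h₂⟩ := hcont (T - Nat.find hex) (Nat.sub_le _ _) e (le_of_eq hpos0.symm) hrem
  have htex : M.texit u' i c = some e.1 := by
    rw [← htc, texit, dif_pos hex]
  have hex' : ∃ t, i ≤ ((M.step u')^[t] c).2 := by
    by_contra h
    rw [texit, dif_neg h] at htex
    cases htex
  rw [texit, dif_pos hex'] at htex
  have hst : ((M.step u')^[Nat.find hex'] c).1 = e.1 := Option.some.inj htex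
  have hpos' : ((M.step u')^[Nat.find hex'] c).2 = i := M.exit_spec hc u' hex'
  have hee : (M.step u')^[Nat.find hex'] c = e := by
    apply Prod.ext hst
    rw [hpos', hpos0]
  exact ⟨t₂ + Nat.find hex', by rw [Function.iterate_add_apply, hee]; exact h₂⟩

lemma sim (hn : 2 ≤ n) (hin : i ≤ n - 1)
    (hsuf : ∀ p, i ≤ p → readBit u p = readBit u' p)
    (htab : ∀ s : Fin d, M.texit u i (s, i - 1) = M.texit u' i (s, i - 1)) :
    ∀ T : ℕ, ∀ c : Fin d × ℕ, i ≤ c.2 → ((M.step u)^[T] c).1 = M.acc →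
      ∃ t, ((M.step u')^[t] c).1 = M.acc := by
  intro T
  induction T using Nat.strong_induction_on with
  | _ T IH =>
  intro c hc hacc
  by_cases hca : c.1 = M.acc
  · exact ⟨0, hca⟩
  cases T with
  | zero => exact absurd hacc hca
  | succ T' =>
  by_cases hcr : c.1 = M.rej
  · rw [Function.iterate_fixed (M.step_halt (Or.inr hcr) u)] at hacc
    exact absurd hacc hca
  have hstep' : M.step u' c = M.step u c := (M.step_congr (hsuf c.2 hc)).symm
  set c₁ := M.step u c with hc₁
  have hacc' : ((M.step u)^[T'] c₁).1 = M.acc := by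
    rw [hc₁, ← Function.iterate_succ_apply]; exact hacc
  by_cases h1 : i ≤ c₁.2
  · obtain ⟨t, ht⟩ := IH T' (Nat.lt_succ_self T') c₁ h1 hacc'
    exact ⟨t + 1, by rw [Function.iterate_succ_apply, hstep']; exact ht⟩
  push_neg at h1
  by_cases h2 : c₁.1 = M.acc
  · exact ⟨1, by rw [Function.iterate_one, hstep']; exact h2⟩
  by_cases h3 : c₁.1 = M.rej
  · rw [Function.iterate_fixed (M.step_halt (Or.inr h3) u)] at hacc'
    exact absurd hacc' h2
  have hb1 := M.pos_step_le u c
  have hb2 := M.pos_le_step u c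
  rw [← hc₁] at hb1 hb2
  have hc2 : c₁.2 = i - 1 := by omega
  have htc : M.texit u i c₁ = M.texit u' i c₁ := by
    have : c₁ = (c₁.1, i - 1) := Prod.ext rfl hc2
    rw [this]; exact htab c₁.1
  obtain ⟨t, ht⟩ := M.cross hn hin (by omega) h2 h3 htc hacc'
    (fun T₂ h₂ c' hc' ha => IH T₂ (by omega) c' hc' ha)
  exact ⟨t + 1, by rw [Function.iterate_succ_apply, hstep']; exact ht⟩

lemma accepts_imp (hn : 2 ≤ n) (hi1 : 1 ≤ i) (hin : i ≤ n - 1)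
    (hsuf : ∀ p, i ≤ p → readBit u p = readBit u' p)
    (hs1 : M.start ≠ M.acc) (hs2 : M.start ≠ M.rej)
    (hinit : M.texit u i (M.start, 0) = M.texit u' i (M.start, 0))
    (htab : ∀ s : Fin d, M.texit u i (s, i - 1) = M.texit u' i (s, i - 1)) :
    M.accepts u → M.accepts u' := by
  rintro ⟨T, hT⟩
  exact M.cross hn hin (show (0:ℕ) < i by omega) hs1 hs2 hinit hT
    (fun T' _ c' hc' ha => M.sim hn hin hsuf htab T' c' hc' ha)

lemma accepts_iff (hn : 2 ≤ n) (hi1 : 1 ≤ i) (hin : i ≤ n - 1)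
    (hsuf : ∀ p, i ≤ p → readBit u p = readBit u' p)
    (hinit : M.texit u i (M.start, 0) = M.texit u' i (M.start, 0))
    (htab : ∀ s : Fin d, M.texit u i (s, i - 1) = M.texit u' i (s, i - 1)) :
    (M.accepts u ↔ M.accepts u') := by
  by_cases hs : M.start = M.acc ∨ M.start = M.rej
  · have h1 : ∀ v : Fin n → Bool, ∀ t : ℕ,
        ((M.step v)^[t] ((M.start : Fin d), (0:ℕ))).1 = M.start := fun v t => by
      rw [Function.iterate_fixed (M.step_halt hs v)]
    constructor
    · rintro ⟨t, ht⟩; exact ⟨0, by rw [h1 u t] at ht; exact ht⟩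
    · rintro ⟨t, ht⟩; exact ⟨0, by rw [h1 u' t] at ht; exact ht⟩
  push_neg at hs
  exact ⟨M.accepts_imp hn hi1 hin hsuf hs.1 hs.2 hinit htab,
    M.accepts_imp hn hi1 hin (fun p hp => (hsuf p hp).symm) hs.1 hs.2 hinit.symm
      (fun s => (htab s).symm)⟩

end TwoDA

/-- The tape with first `i` squares given by `ρ` and the rest by `γ`. -/
def tapeOf (n i : ℕ) (ρ : Fin i → Bool) (γ : Fin (n - i) → Bool) : Fin n → Bool :=
  fun s => if h : (s : ℕ) < i then ρ ⟨s, h⟩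
    else γ ⟨(s : ℕ) - i, by have := s.isLt; omega⟩

lemma tapeOf_perm {n : ℕ} (θ : Equiv.Perm (Fin n)) (i : ℕ) (ρ : Fin i → Bool)
    (γ : Fin (n - i) → Bool) :
    (fun j => tapeOf n i ρ γ (θ j)) = assembleInput θ.symm i ρ γ := by
  funext j
  simp [tapeOf, assembleInput]

lemma readBit_tapeOf_lt {n i : ℕ} (hin : i ≤ n) {p : ℕ} (hp : p < i)
    (ρ : Fin i → Bool) (γ γ' : Fin (n - i) → Bool) :
    readBit (tapeOf n i ρ γ) p = readBit (tapeOf n i ρ γ') p := by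
  have hpn : p < n := by omega
  simp [readBit, tapeOf, hpn, hp]

lemma readBit_tapeOf_ge {n i : ℕ} {p : ℕ} (hp : i ≤ p)
    (ρ ρ' : Fin i → Bool) (γ : Fin (n - i) → Bool) :
    readBit (tapeOf n i ρ γ) p = readBit (tapeOf n i ρ' γ) p := by
  by_cases hpn : p < n
  · simp [readBit, tapeOf, hpn, Nat.not_lt.mpr hp]
  · simp [readBit, hpn]

theorem stmt0 (n d : ℕ) (f : (Fin n → Bool) → Bool) (M : TwoDA n d)
    (hM : M.ComputesShuffled f) :
    Nsub n f ≤ (d + 1) ^ (d + 1) := by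
  obtain ⟨θ, hθ⟩ := hM
  refine le_trans (ciInf_le (OrderBot.bddBelow _) θ.symm) ?_
  refine Finset.sup_le ?_
  intro i hi
  rw [Finset.mem_Icc] at hi
  obtain ⟨hi1, hin⟩ := hi
  have hn : 2 ≤ n := by omega
  have hinn : i ≤ n := by omega
  -- the subfunction determined by ρ
  set G : (Fin i → Bool) → (Fin (n - i) → Bool) → Bool :=
    fun ρ γ => f (assembleInput θ.symm i ρ γ) with hG
  -- f on the assembled input is decided by acceptance on the corresponding tape
  have hIff : ∀ ρ γ, (G ρ γ = true ↔ M.accepts (tapeOf n i ρ γ)) := by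
    intro ρ γ
    have h1 := hθ (tapeOf n i ρ γ)
    simp only [tapeOf_perm θ i ρ γ] at h1
    constructor
    · exact h1.1
    · intro hacc
      by_contra hne
      exact M.not_accepts_and_rejects (tapeOf n i ρ γ)
        ⟨hacc, h1.2 (Bool.not_eq_true _ ▸ hne)⟩
  -- the behaviour of a prefix
  set B : (Fin i → Bool) → Option (Fin d) × (Fin d → Option (Fin d)) :=
    fun ρ => (M.texit (tapeOf n i ρ (fun _ => false)) i (M.start, 0),
      fun s => M.texit (tapeOf n i ρ (fun _ => false)) i (s, i - 1)) with hB
  have hcore : ∀ ρ ρ', B ρ = B ρ' → G ρ = G ρ' := by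
    intro ρ ρ' hBeq
    funext γ
    set u := tapeOf n i ρ γ with hu
    set u' := tapeOf n i ρ' γ with hu'
    have htrans : ∀ c : Fin d × ℕ, c.2 < i →
        M.texit (tapeOf n i ρ (fun _ => false)) i c
          = M.texit (tapeOf n i ρ' (fun _ => false)) i c →
        M.texit u i c = M.texit u' i c := by
      intro c hc h0
      calc M.texit u i c
          = M.texit (tapeOf n i ρ (fun _ => false)) i c :=
            M.texit_congr (fun p hp => readBit_tapeOf_lt hinn hp ρ γ _) hc
        _ = M.texit (tapeOf n i ρ' (fun _ => false)) i c := h0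
        _ = M.texit u' i c :=
            M.texit_congr (fun p hp => (readBit_tapeOf_lt hinn hp ρ' γ _).symm) hc
    have hinit : M.texit u i (M.start, 0) = M.texit u' i (M.start, 0) :=
      htrans (M.start, 0) (by omega) (congrArg Prod.fst hBeq)
    have htab : ∀ s : Fin d, M.texit u i (s, i - 1) = M.texit u' i (s, i - 1) :=
      fun s => htrans (s, i - 1) (by omega)
        (congrFun (congrArg Prod.snd hBeq) s)
    have hsuf : ∀ p, i ≤ p → readBit u p = readBit u' p :=
      fun p hp => readBit_tapeOf_ge hp ρ ρ' γ
    have hacc : M.accepts u ↔ M.accepts u' :=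
      M.accepts_iff hn hi1 hin hsuf hinit htab
    have hiff : G ρ γ = true ↔ G ρ' γ = true := (hIff ρ γ).trans (hacc.trans (hIff ρ' γ).symm)
    exact Bool.eq_iff_iff.mpr hiff
  -- counting
  classical
  set Ψ : (Option (Fin d) × (Fin d → Option (Fin d))) → ((Fin (n - i) → Bool) → Bool) :=
    fun b => if h : ∃ ρ, B ρ = b then G h.choose else fun _ => false with hΨ
  have hfact : ∀ ρ, G ρ = Ψ (B ρ) := by
    intro ρ
    have hex : ∃ ρ', B ρ' = B ρ := ⟨ρ, rfl⟩
    rw [hΨ]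
    simp only [dif_pos hex]
    exact (hcore _ _ hex.choose_spec).symm
  have hsub : { g : (Fin (n - i) → Bool) → Bool |
      ∃ ρ : Fin i → Bool, g = fun γ => f (assembleInput θ.symm i ρ γ) } ⊆ Set.range Ψ := by
    rintro g ⟨ρ, rfl⟩
    exact ⟨B ρ, (hfact ρ).symm⟩
  have hcard : (Set.range Ψ).ncard ≤ (d + 1) ^ (d + 1) := by
    rw [← Set.image_univ]
    refine le_trans (Set.ncard_image_le Set.finite_univ) ?_
    rw [Set.ncard_univ]
    simp [Nat.card_eq_fintype_card, pow_succ, mul_comm]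
  exact le_trans (Set.ncard_le_ncard hsub (Set.finite_range Ψ)) hcard
end

section
/- If a language L ⊆ {0,1}* is recognized by a 2DFA of size d, then for every n, R_n(L) ≤ (d+1)^{d+1}. -/
/-! ## STATEMENT 1 -/

namespace Stmt1

variable {d : ℕ}

/-- The crossing/halting predicate: head at square `r+1`, or a halting state. -/
def CrossP (M : TwoDFA d) (r : ℕ) (c : Fin d × ℕ) : Prop :=
  c.2 = r + 1 ∨ c.1 = M.acc ∨ c.1 = M.rej

instance (M : TwoDFA d) (r : ℕ) (c : Fin d × ℕ) : Decidable (CrossP M r c) := by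
  unfold CrossP; exact inferInstance

/-- The state at the first time the run on input `u` from `c` reaches square
`u.length + 1` or halts (`none` if this never happens). -/
noncomputable def cross (M : TwoDFA d) (u : List Bool) (c : Fin d × ℕ) : Option (Fin d) :=
  letI := Classical.dec (∃ t, CrossP M u.length ((M.step u)^[t] c))
  if h : ∃ t, CrossP M u.length ((M.step u)^[t] c)
  then some (((M.step u)^[Nat.find h] c).1) else none

abbrev Tbl (d : ℕ) : Type := Option (Fin d) × (Fin d → Option (Fin d))

/-- The crossing table of a prefix `u`. -/
noncomputable def tbl (M : TwoDFA d) (u : List Bool) : Tbl d :=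
  (cross M u (M.start, 0), fun s => cross M u (s, u.length))

/-- Abstract dynamics on the right part of the tape, consulting the table `g` when
the head would cross to square `r` (into the prefix). -/
def rightStep (M : TwoDFA d) (r : ℕ) (g : Fin d → Option (Fin d)) (y : List Bool) :
    Option (Fin d × ℕ) → Option (Fin d × ℕ)
  | none => none
  | some c =>
    if c.1 = M.acc ∨ c.1 = M.rej then some c
    else if movePos c.2 (M.δ c.1 (tapeSym y (c.2 - r))).2 = r then
      (g (M.δ c.1 (tapeSym y (c.2 - r))).1).map (fun s => (s, r + 1))
    else some ((M.δ c.1 (tapeSym y (c.2 - r))).1, movePos c.2 (M.δ c.1 (tapeSym y (c.2 - r))).2)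

noncomputable def aRun (M : TwoDFA d) (r : ℕ) (τ : Tbl d) (y : List Bool) (k : ℕ) :
    Option (Fin d × ℕ) :=
  (rightStep M r τ.2 y)^[k] (τ.1.map (fun s => (s, r + 1)))

/-- Abstract acceptance. -/
def AAcc (M : TwoDFA d) (r : ℕ) (τ : Tbl d) (y : List Bool) : Prop :=
  ∃ k c, aRun M r τ y k = some c ∧ c.1 = M.acc

lemma tapeSym_append_left (u y : List Bool) {p : ℕ} (hp : p ≤ u.length) :
    tapeSym (u ++ y) p = tapeSym u p := by
  unfold tapeSym
  rcases Nat.eq_zero_or_pos p with h0 | h0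
  · simp [h0]
  · have h1 : p - 1 < u.length := by omega
    have h2 : p - 1 < (u ++ y).length := by simp; omega
    rw [if_neg (by omega), if_neg (by omega), dif_pos h1, dif_pos h2]
    simp [List.get_eq_getElem, List.getElem_append_left h1]

lemma tapeSym_append_right (u y : List Bool) {p : ℕ} (hp : u.length + 1 ≤ p) :
    tapeSym (u ++ y) p = tapeSym y (p - u.length) := by
  unfold tapeSym
  rw [if_neg (by omega), if_neg (by omega)]
  have hlen : (u ++ y).length = u.length + y.length := List.length_append
  by_cases h2 : p - u.length - 1 < y.length
  · have h1 : p - 1 < (u ++ y).length := by omega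
    rw [dif_pos h1, dif_pos h2]
    simp only [List.get_eq_getElem]
    rw [List.getElem_append_right (by omega)]
    have hidx : p - 1 - u.length = p - u.length - 1 := by omega
    simp [hidx]
  · have h1 : ¬ (p - 1 < (u ++ y).length) := by omega
    rw [dif_neg h1, dif_neg h2]

lemma step_append_left (M : TwoDFA d) (u y : List Bool) {c : Fin d × ℕ}
    (h : c.2 ≤ u.length) : M.step (u ++ y) c = M.step u c := by
  unfold TwoDFA.step
  rw [tapeSym_append_left u y h]

lemma step_halt (M : TwoDFA d) (w : List Bool) {c : Fin d × ℕ}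
    (h : c.1 = M.acc ∨ c.1 = M.rej) : M.step w c = c := if_pos h

lemma iterate_halt (M : TwoDFA d) (w : List Bool) {c : Fin d × ℕ}
    (h : c.1 = M.acc ∨ c.1 = M.rej) (t : ℕ) : (M.step w)^[t] c = c := by
  induction t with
  | zero => rfl
  | succ t ih => rw [Function.iterate_succ_apply', ih, step_halt M w h]

lemma movePos_le (p : ℕ) (dir : Dir) : movePos p dir ≤ p + 1 := by
  cases dir <;> simp [movePos] <;> omega

lemma movePos_ge (p : ℕ) (dir : Dir) : p - 1 ≤ movePos p dir := by
  cases dir <;> simp [movePos] <;> omega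

lemma step_eq (M : TwoDFA d) (w : List Bool) {c : Fin d × ℕ}
    (hh : ¬ (c.1 = M.acc ∨ c.1 = M.rej)) :
    M.step w c = ((M.δ c.1 (tapeSym w c.2)).1, movePos c.2 (M.δ c.1 (tapeSym w c.2)).2) := by
  unfold TwoDFA.step
  rw [if_neg hh]

lemma step_pos_le (M : TwoDFA d) (w : List Bool) (c : Fin d × ℕ) :
    (M.step w c).2 ≤ c.2 + 1 := by
  by_cases hh : c.1 = M.acc ∨ c.1 = M.rej
  · rw [step_halt M w hh]; omega
  · rw [step_eq M w hh]; exact movePos_le _ _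

lemma step_pos_ge (M : TwoDFA d) (w : List Bool) (c : Fin d × ℕ) :
    c.2 - 1 ≤ (M.step w c).2 := by
  by_cases hh : c.1 = M.acc ∨ c.1 = M.rej
  · rw [step_halt M w hh]; omega
  · rw [step_eq M w hh]; exact movePos_ge _ _

lemma cross_of_crossP (M : TwoDFA d) (u : List Bool) {c : Fin d × ℕ}
    (h : CrossP M u.length c) : cross M u c = some c.1 := by
  unfold cross
  have hex : ∃ t, CrossP M u.length ((M.step u)^[t] c) := ⟨0, h⟩
  rw [dif_pos hex]
  have : Nat.find hex = 0 := Nat.find_eq_zero hex |>.mpr h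
  simp [this]

lemma cross_step (M : TwoDFA d) (u : List Bool) {c : Fin d × ℕ}
    (h : ¬ CrossP M u.length c) : cross M u c = cross M u (M.step u c) := by
  unfold cross
  by_cases hex : ∃ t, CrossP M u.length ((M.step u)^[t] c)
  · have hex' : ∃ t, CrossP M u.length ((M.step u)^[t] (M.step u c)) := by
      obtain ⟨t, ht⟩ := hex
      cases t with
      | zero => exact absurd ht h
      | succ t => exact ⟨t, by rwa [← Function.iterate_succ_apply]⟩
    rw [dif_pos hex, dif_pos hex']
    have h1 : Nat.find hex = Nat.find hex' + 1 := by
      have hub : Nat.find hex ≤ Nat.find hex' + 1 := by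
        apply Nat.find_le
        rw [Function.iterate_succ_apply]
        exact Nat.find_spec hex'
      have hne : Nat.find hex ≠ 0 := by
        intro h0
        exact h (by simpa [h0] using Nat.find_spec hex)
      obtain ⟨j, hj⟩ : ∃ j, Nat.find hex = j + 1 := ⟨Nat.find hex - 1, by omega⟩
      have hlb : Nat.find hex' ≤ j := by
        apply Nat.find_le
        rw [← Function.iterate_succ_apply]
        have hs := Nat.find_spec hex
        rw [hj] at hs
        exact hs
      omega
    rw [h1, Function.iterate_succ_apply]
  · have hex' : ¬ ∃ t, CrossP M u.length ((M.step u)^[t] (M.step u c)) := by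
      rintro ⟨t, ht⟩
      exact hex ⟨t + 1, by rwa [Function.iterate_succ_apply]⟩
    rw [dif_neg hex, dif_neg hex']

lemma cross_some (M : TwoDFA d) (u : List Bool) {c : Fin d × ℕ} {s : Fin d}
    (h : cross M u c = some s) :
    ∃ t, ((M.step u)^[t] c).1 = s ∧ CrossP M u.length ((M.step u)^[t] c) ∧
      ∀ t' < t, ¬ CrossP M u.length ((M.step u)^[t'] c) := by
  unfold cross at h
  by_cases hex : ∃ t, CrossP M u.length ((M.step u)^[t] c)
  · rw [dif_pos hex] at h
    exact ⟨Nat.find hex, Option.some.inj h, Nat.find_spec hex,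
      fun t' ht' => Nat.find_min hex ht'⟩
  · rw [dif_neg hex] at h
    exact absurd h (by simp)

lemma run_agree (M : TwoDFA d) (u y : List Bool) {c : Fin d × ℕ} (hc : c.2 ≤ u.length) :
    ∀ t, (∀ t' < t, ¬ CrossP M u.length ((M.step u)^[t'] c)) →
      ((M.step u)^[t] c).2 ≤ u.length + 1 ∧ (M.step (u ++ y))^[t] c = (M.step u)^[t] c := by
  intro t
  induction t with
  | zero => exact fun _ => ⟨by simpa using Nat.le_succ_of_le hc, rfl⟩
  | succ t ih =>
    intro hno
    obtain ⟨hpos, heq⟩ := ih (fun t' ht' => hno t' (by omega))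
    have hnc := hno t (by omega)
    have hp2 : ((M.step u)^[t] c).2 ≤ u.length := by
      rcases Nat.lt_or_ge ((M.step u)^[t] c).2 (u.length + 1) with h | h
      · omega
      · exact absurd (Or.inl (by omega)) hnc
    constructor
    · rw [Function.iterate_succ_apply']
      have := step_pos_le M u ((M.step u)^[t] c)
      omega
    · rw [Function.iterate_succ_apply', Function.iterate_succ_apply', heq,
        step_append_left M u y hp2]

/-- The simulation relation between real configurations (on input `u ++ y`) and
abstract configurations. -/
def Sim (M : TwoDFA d) (u : List Bool) (c : Fin d × ℕ) (a : Option (Fin d × ℕ)) : Prop :=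
  (c.2 ≤ u.length ∧ a = (cross M u c).map (fun s => (s, u.length + 1)))
  ∨ (u.length + 1 ≤ c.2 ∧ a = some c)

/-- One step of the real machine, starting in the left part, preserves the clause-1
abstract configuration. -/
lemma sim_left_step (M : TwoDFA d) (u y : List Bool) {c : Fin d × ℕ}
    (hc : c.2 ≤ u.length) :
    Sim M u (M.step (u ++ y) c) ((cross M u c).map (fun s => (s, u.length + 1))) := by
  by_cases hh : c.1 = M.acc ∨ c.1 = M.rej
  · rw [step_halt M _ hh]
    exact Or.inl ⟨hc, rfl⟩
  · have hnc : ¬ CrossP M u.length c := by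
      rintro (h | h | h)
      · omega
      · exact hh (Or.inl h)
      · exact hh (Or.inr h)
    rw [step_append_left M u y hc]
    rcases Nat.lt_or_ge (M.step u c).2 (u.length + 1) with h | h
    · exact Or.inl ⟨by omega, by rw [cross_step M u hnc]⟩
    · have hp : (M.step u c).2 = u.length + 1 := by
        have := step_pos_le M u c
        omega
      have hcc : cross M u c = some ((M.step u c).1) := by
        rw [cross_step M u hnc]
        exact cross_of_crossP M u (Or.inl hp)
      refine Or.inr ⟨by omega, ?_⟩
      rw [hcc, Option.map_some]
      exact congrArg some (Prod.ext rfl hp.symm)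

/-- One step of the real machine, starting in the right part, matches one abstract step. -/
lemma sim_right_step (M : TwoDFA d) (u y : List Bool) {c : Fin d × ℕ}
    (hc : u.length + 1 ≤ c.2) :
    Sim M u (M.step (u ++ y) c)
      (rightStep M u.length (fun s => cross M u (s, u.length)) y (some c)) := by
  by_cases hh : c.1 = M.acc ∨ c.1 = M.rej
  · rw [step_halt M _ hh]
    simp only [rightStep, if_pos hh]
    exact Or.inr ⟨hc, rfl⟩
  · have hsym : tapeSym (u ++ y) c.2 = tapeSym y (c.2 - u.length) :=
      tapeSym_append_right u y hc
    have hstep : M.step (u ++ y) c =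
        ((M.δ c.1 (tapeSym y (c.2 - u.length))).1,
          movePos c.2 (M.δ c.1 (tapeSym y (c.2 - u.length))).2) := by
      rw [step_eq M _ hh, hsym]
    simp only [rightStep, if_neg hh]
    by_cases hp : movePos c.2 (M.δ c.1 (tapeSym y (c.2 - u.length))).2 = u.length
    · rw [if_pos hp]
      refine Or.inl ⟨by rw [hstep]; exact le_of_eq hp, ?_⟩
      rw [hstep, hp]
    · rw [if_neg hp]
      have hge : u.length + 1 ≤ movePos c.2 (M.δ c.1 (tapeSym y (c.2 - u.length))).2 := by
        have := movePos_ge c.2 (M.δ c.1 (tapeSym y (c.2 - u.length))).2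
        omega
      exact Or.inr ⟨by rw [hstep]; exact hge, by rw [hstep]⟩

lemma sim_fwd (M : TwoDFA d) (u y : List Bool) {c : Fin d × ℕ} {a : Option (Fin d × ℕ)}
    (h : Sim M u c a) :
    Sim M u (M.step (u ++ y) c) a ∨
    Sim M u (M.step (u ++ y) c)
      (rightStep M u.length (fun s => cross M u (s, u.length)) y a) := by
  rcases h with ⟨hc, ha⟩ | ⟨hc, ha⟩
  · left; rw [ha]; exact sim_left_step M u y hc
  · right; rw [ha]; exact sim_right_step M u y hc

lemma sim_bwd (M : TwoDFA d) (u y : List Bool) {c : Fin d × ℕ} {a : Option (Fin d × ℕ)}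
    (h : Sim M u c a) :
    ∃ m, Sim M u ((M.step (u ++ y))^[m] c)
      (rightStep M u.length (fun s => cross M u (s, u.length)) y a) := by
  rcases h with ⟨hc, ha⟩ | ⟨hc, ha⟩
  · rcases hcr : cross M u c with _ | s
    · refine ⟨0, Or.inl ⟨hc, ?_⟩⟩
      simp [ha, hcr, rightStep]
    · obtain ⟨m, hst, hcross, hmin⟩ := cross_some M u hcr
      obtain ⟨hpos, heq⟩ := run_agree M u y hc m hmin
      rcases Nat.lt_or_ge ((M.step u)^[m] c).2 (u.length + 1) with hlt | hge
      · -- halted inside the prefix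
        have hh : ((M.step u)^[m] c).1 = M.acc ∨ ((M.step u)^[m] c).1 = M.rej := by
          rcases hcross with h | h | h
          · omega
          · exact Or.inl h
          · exact Or.inr h
        have hhs : s = M.acc ∨ s = M.rej := hst ▸ hh
        refine ⟨m, ?_⟩
        rw [ha, hcr]
        have : rightStep M u.length (fun s => cross M u (s, u.length)) y
            (some (s, u.length + 1)) = some (s, u.length + 1) := by
          simp only [rightStep]
          rw [if_pos hhs]
        rw [show ((some s).map (fun s => (s, u.length + 1))) = some (s, u.length + 1) from rfl,
          this, heq]
        exact Or.inl ⟨by omega, by rw [cross_of_crossP M u hcross, hst]; rfl⟩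
      · -- crossed to square u.length + 1
        have hp : ((M.step u)^[m] c).2 = u.length + 1 := by omega
        have hce : (M.step u)^[m] c = (s, u.length + 1) := by
          rw [Prod.ext_iff]
          exact ⟨hst, hp⟩
        refine ⟨m + 1, ?_⟩
        rw [Function.iterate_succ_apply', heq, hce, ha, hcr]
        exact sim_right_step M u y (by omega)
  · exact ⟨1, by rw [Function.iterate_one, ha]; exact sim_right_step M u y hc⟩

lemma sim_acc_fwd (M : TwoDFA d) (u : List Bool) {c : Fin d × ℕ} {a : Option (Fin d × ℕ)}
    (h : Sim M u c a) (hacc : c.1 = M.acc) :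
    ∃ c', a = some c' ∧ c'.1 = M.acc := by
  rcases h with ⟨hc, ha⟩ | ⟨hc, ha⟩
  · have : cross M u c = some c.1 := cross_of_crossP M u (Or.inr (Or.inl hacc))
    exact ⟨(c.1, u.length + 1), by simp [ha, this], hacc⟩
  · exact ⟨c, ha, hacc⟩

lemma sim_acc_bwd (M : TwoDFA d) (u y : List Bool) {c : Fin d × ℕ} {c' : Fin d × ℕ}
    {a : Option (Fin d × ℕ)} (h : Sim M u c a) (ha : a = some c') (hacc : c'.1 = M.acc) :
    ∃ m, ((M.step (u ++ y))^[m] c).1 = M.acc := by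
  rcases h with ⟨hc, haa⟩ | ⟨hc, haa⟩
  · rw [ha] at haa
    rcases hcr : cross M u c with _ | s
    · rw [hcr] at haa; exact absurd haa (by simp)
    · rw [hcr] at haa
      have hs : s = c'.1 := by
        have := haa.symm
        simp only [Option.map_some] at this
        cases this
        rfl
      obtain ⟨m, hst, hcross, hmin⟩ := cross_some M u hcr
      obtain ⟨_, heq⟩ := run_agree M u y hc m hmin
      exact ⟨m, by rw [heq, hst, hs, hacc]⟩
  · rw [ha] at haa
    cases haa
    exact ⟨0, hacc⟩

lemma sim_run_fwd (M : TwoDFA d) (u y : List Bool) (t : ℕ) :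
    ∃ k, Sim M u ((M.step (u ++ y))^[t] (M.start, 0))
      (aRun M u.length (tbl M u) y k) := by
  induction t with
  | zero =>
    refine ⟨0, Or.inl ⟨Nat.zero_le _, ?_⟩⟩
    rfl
  | succ t ih =>
    obtain ⟨k, hk⟩ := ih
    rcases sim_fwd M u y hk with h | h
    · exact ⟨k, by rwa [Function.iterate_succ_apply']⟩
    · refine ⟨k + 1, ?_⟩
      rw [Function.iterate_succ_apply']
      rw [aRun, Function.iterate_succ_apply']
      exact h

lemma sim_run_bwd (M : TwoDFA d) (u y : List Bool) (k : ℕ) :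
    ∃ t, Sim M u ((M.step (u ++ y))^[t] (M.start, 0))
      (aRun M u.length (tbl M u) y k) := by
  induction k with
  | zero => exact ⟨0, Or.inl ⟨Nat.zero_le _, rfl⟩⟩
  | succ k ih =>
    obtain ⟨t, ht⟩ := ih
    obtain ⟨m, hm⟩ := sim_bwd M u y ht
    refine ⟨t + m, ?_⟩
    rw [Nat.add_comm t m, Function.iterate_add_apply]
    rw [aRun, Function.iterate_succ_apply']
    exact hm

lemma accepts_iff_AAcc (M : TwoDFA d) (u y : List Bool) :
    M.accepts (u ++ y) ↔ AAcc M u.length (tbl M u) y := by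
  constructor
  · rintro ⟨t, ht⟩
    obtain ⟨k, hk⟩ := sim_run_fwd M u y t
    obtain ⟨c', hc', hacc⟩ := sim_acc_fwd M u hk ht
    exact ⟨k, c', hc', hacc⟩
  · rintro ⟨k, c', hk, hacc⟩
    obtain ⟨t, ht⟩ := sim_run_bwd M u y k
    obtain ⟨m, hm⟩ := sim_acc_bwd M u y ht hk hacc
    exact ⟨m + t, by rwa [Function.iterate_add_apply]⟩

lemma accepts_congr (M : TwoDFA d) (u v y : List Bool) (hlen : u.length = v.length)
    (htbl : tbl M u = tbl M v) : (M.accepts (u ++ y) ↔ M.accepts (v ++ y)) := by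
  rw [accepts_iff_AAcc, accepts_iff_AAcc, hlen, htbl]

lemma mem_iff_accepts {L : Set (List Bool)} (M : TwoDFA d) (hM : M.Recognizes L)
    (w : List Bool) : w ∈ L ↔ M.accepts w := by
  refine ⟨(hM w).1, fun hacc => ?_⟩
  by_contra hmem
  obtain ⟨t2, ht2⟩ := (hM w).2 hmem
  obtain ⟨t1, ht1⟩ := hacc
  rcases Nat.le_total t1 t2 with h | h
  · have : (M.step w)^[t2] (M.start, 0) = (M.step w)^[t1] (M.start, 0) := by
      rw [show t2 = (t2 - t1) + t1 from by omega, Function.iterate_add_apply]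
      exact iterate_halt M w (Or.inl ht1) _
    rw [this, ht1] at ht2
    exact M.acc_ne_rej ht2
  · have : (M.step w)^[t1] (M.start, 0) = (M.step w)^[t2] (M.start, 0) := by
      rw [show t1 = (t1 - t2) + t2 from by omega, Function.iterate_add_apply]
      exact iterate_halt M w (Or.inr ht2) _
    rw [this, ht2] at ht1
    exact M.acc_ne_rej ht1.symm

lemma Rr_le {L : Set (List Bool)} (M : TwoDFA d) (hM : M.Recognizes L) (n r : ℕ) :
    Rr L n r ≤ (d + 1) ^ (d + 1) := by
  classical
  have hcard : Nat.card (Tbl d) = (d + 1) ^ (d + 1) := by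
    simp [Tbl, Nat.card_eq_fintype_card, Fintype.card_fun, pow_succ, Nat.mul_comm]
  set S : Set ({ y : List Bool // y.length = n - r } → Prop) :=
    { g | ∃ u : List Bool, u.length = r ∧ g = fun y => (u ++ y.1) ∈ L } with hS
  have key : S.ncard ≤ (Set.univ : Set (Tbl d)).ncard := by
    apply Set.ncard_le_ncard_of_injOn
      (fun g => if h : ∃ u : List Bool, u.length = r ∧ g = fun y => (u ++ y.1) ∈ L
        then tbl M h.choose else (none, fun _ => none))
    · exact fun g _ => Set.mem_univ _
    · intro g1 hg1 g2 hg2 heq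
      have hg1' : ∃ u : List Bool, u.length = r ∧ g1 = fun y => (u ++ y.1) ∈ L := hg1
      have hg2' : ∃ u : List Bool, u.length = r ∧ g2 = fun y => (u ++ y.1) ∈ L := hg2
      dsimp only at heq
      rw [dif_pos hg1', dif_pos hg2'] at heq
      obtain ⟨hl1, he1⟩ := hg1'.choose_spec
      obtain ⟨hl2, he2⟩ := hg2'.choose_spec
      rw [he1, he2]
      funext y
      apply propext
      rw [mem_iff_accepts M hM, mem_iff_accepts M hM]
      exact accepts_congr M _ _ y.1 (hl1.trans hl2.symm) heq
  rw [Set.ncard_univ, hcard] at key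
  exact key

end Stmt1

theorem stmt1 (d : ℕ) (L : Set (List Bool)) (M : TwoDFA d) (hM : M.Recognizes L) :
    ∀ n : ℕ, Rn L n ≤ (d + 1) ^ (d + 1) := by
  intro n
  exact Finset.sup_le (fun r _ => Stmt1.Rr_le M hM n r)
end

section
/- If a language L ⊆ {0,1}* is recognized by a 2NFA of size d, then for every n, R_n(L) ≤ 2^{(d+1)^2}. -/
/-! ## Crossing tables for 2NFAs (auxiliary machinery for Statement 3) -/

namespace Stmt3Aux

variable {d : ℕ}

/-- A step of `M` staying inside the left region `[0, r]`. -/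
def LstepRel (M : TwoNFA d) (u : List Bool) (r : ℕ) (c c' : Fin d × ℕ) : Prop :=
  M.stepRel u c c' ∧ c.2 ≤ r

/-- Entry configurations at the boundary `r`: `none` is the initial configuration,
`some s` is state `s` on square `r` (just entered from the right). -/
def entryConf (M : TwoNFA d) (r : ℕ) : Option (Fin d) → Fin d × ℕ
  | none => (M.start, 0)
  | some s => (s, r)

open scoped Classical in
/-- The crossing table of a prefix `u`: which states can exit on the right,
and whether acceptance can occur inside the prefix. -/
noncomputable def crossTable (M : TwoNFA d) (u : List Bool) :
    (Option (Fin d) → Fin d → Bool) × (Option (Fin d) → Bool) :=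
  (fun e s => if Relation.ReflTransGen (LstepRel M u u.length)
      (entryConf M u.length e) (s, u.length + 1) then true else false,
   fun e => if ∃ p ≤ u.length, Relation.ReflTransGen (LstepRel M u u.length)
      (entryConf M u.length e) (M.acc, p) then true else false)

lemma if_tf_eq {A B : Prop} [Decidable A] [Decidable B]
    (h : (if A then true else false) = (if B then true else false)) : A ↔ B := by
  split_ifs at h <;> simp_all

lemma tape_left (u y : List Bool) {p : ℕ} (hp : p ≤ u.length) :
    tapeSym (u ++ y) p = tapeSym u p := by
  unfold tapeSym
  rcases Nat.eq_zero_or_pos p with h0 | h0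
  · simp [h0]
  · have h1 : p - 1 < u.length := by omega
    have h2 : p - 1 < (u ++ y).length := by simp; omega
    rw [if_neg (by omega), if_neg (by omega), dif_pos h1, dif_pos h2]
    simp only [List.get_eq_getElem]
    rw [List.getElem_append_left h1]

lemma tape_right (u v y : List Bool) (hlen : u.length = v.length) {p : ℕ}
    (hp : u.length + 1 ≤ p) : tapeSym (u ++ y) p = tapeSym (v ++ y) p := by
  unfold tapeSym
  rw [if_neg (by omega), if_neg (by omega)]
  by_cases h1 : p - 1 < (u ++ y).length
  · have h2 : p - 1 < (v ++ y).length := by simp at h1 ⊢; omega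
    rw [dif_pos h1, dif_pos h2]
    simp only [List.get_eq_getElem]
    rw [List.getElem_append_right (by omega), List.getElem_append_right (by omega)]
    congr 2
    omega
  · have h2 : ¬ (p - 1 < (v ++ y).length) := by simp at h1 ⊢; omega
    rw [dif_neg h1, dif_neg h2]

lemma stepRel_congr (M : TwoNFA d) {w w' : List Bool} {c c' : Fin d × ℕ}
    (h : tapeSym w c.2 = tapeSym w' c.2) (hs : M.stepRel w c c') : M.stepRel w' c c' := by
  obtain ⟨h1, h2, r, hr, he⟩ := hs
  exact ⟨h1, h2, r, h ▸ hr, he⟩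

lemma stepRel_pos (M : TwoNFA d) {w : List Bool} {c c' : Fin d × ℕ}
    (hs : M.stepRel w c c') : c.2 - 1 ≤ c'.2 ∧ c'.2 ≤ c.2 + 1 := by
  obtain ⟨-, -, r, -, he⟩ := hs
  subst he
  cases r.2 <;> simp [movePos] <;> omega

/-- Lift a run of `M` on `v` inside the left region to a run on `v ++ y`. -/
lemma lift_left (M : TwoNFA d) (v y : List Bool) {c c' : Fin d × ℕ}
    (h : Relation.ReflTransGen (LstepRel M v v.length) c c') :
    Relation.ReflTransGen (M.stepRel (v ++ y)) c c' := by
  refine Relation.ReflTransGen.mono ?_ _ _ h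
  rintro a b ⟨hs, hle⟩
  exact stepRel_congr M (tape_left v y hle).symm hs

/-- Main transfer lemma: if `u` and `v` have the same length and the same crossing
table, then an accepting run on `u ++ y` can be transferred to `v ++ y`. -/
lemma transfer (M : TwoNFA d) (u v y : List Bool) (hlen : u.length = v.length)
    (htab : crossTable M u = crossTable M v)
    {c : Fin d × ℕ} {p : ℕ}
    (hrun : Relation.ReflTransGen (M.stepRel (u ++ y)) c (M.acc, p)) :
    (u.length + 1 ≤ c.2 → ∃ p', Relation.ReflTransGen (M.stepRel (v ++ y)) c (M.acc, p')) ∧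
    (∀ e, c.2 ≤ u.length →
      Relation.ReflTransGen (LstepRel M u u.length) (entryConf M u.length e) c →
      ∃ p', Relation.ReflTransGen (M.stepRel (v ++ y)) (entryConf M u.length e) (M.acc, p')) := by
  classical
  have htabC := congrArg Prod.fst htab
  have htabA := congrArg Prod.snd htab
  -- extraction of table facts, rewritten to boundary `u.length`
  have hC : ∀ e s, Relation.ReflTransGen (LstepRel M u u.length)
      (entryConf M u.length e) (s, u.length + 1) →
      Relation.ReflTransGen (M.stepRel (v ++ y)) (entryConf M u.length e) (s, u.length + 1) := by
    intro e s h
    have := if_tf_eq (congrFun (congrFun htabC e) s)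
    unfold crossTable at this
    have h2 := this.1 h
    rw [← hlen] at h2
    exact lift_left M v y (by rw [hlen]; exact (by rw [← hlen]; exact h2))
  have hA : ∀ e, (∃ q ≤ u.length, Relation.ReflTransGen (LstepRel M u u.length)
      (entryConf M u.length e) (M.acc, q)) →
      ∃ q, Relation.ReflTransGen (M.stepRel (v ++ y)) (entryConf M u.length e) (M.acc, q) := by
    intro e h
    have := if_tf_eq (congrFun htabA e)
    unfold crossTable at this
    obtain ⟨q, hq, hrun'⟩ := this.1 h
    refine ⟨q, ?_⟩
    have := lift_left M v y hrun'
    rw [← hlen] at this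
    exact this
  induction hrun using Relation.ReflTransGen.head_induction_on with
  | refl =>
    constructor
    · intro _
      exact ⟨p, Relation.ReflTransGen.refl⟩
    · intro e hle hreach
      exact hA e ⟨p, hle, hreach⟩
  | head hstep hrest ih =>
    rename_i a c₁
    have hpos := stepRel_pos M hstep
    constructor
    · intro hge
      have hstep' : M.stepRel (v ++ y) a c₁ :=
        stepRel_congr M (tape_right u v y hlen hge) hstep
      by_cases hcase : u.length + 1 ≤ c₁.2
      · obtain ⟨p', h'⟩ := ih.1 hcase
        exact ⟨p', h'.head hstep'⟩
      · have hc1 : c₁.2 = u.length := by omega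
        have hreach : Relation.ReflTransGen (LstepRel M u u.length)
            (entryConf M u.length (some c₁.1)) c₁ := by
          have : entryConf M u.length (some c₁.1) = c₁ := by
            simp [entryConf]
            exact Prod.ext rfl hc1.symm
          rw [this]
        obtain ⟨p', h'⟩ := ih.2 (some c₁.1) (le_of_eq hc1) hreach
        have : entryConf M u.length (some c₁.1) = c₁ := by
          simp [entryConf]; exact Prod.ext rfl hc1.symm
        rw [this] at h'
        exact ⟨p', h'.head hstep'⟩
    · intro e hle hreach
      have hstep_u : M.stepRel u a c₁ := stepRel_congr M (tape_left u y hle) hstep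
      have hL : LstepRel M u u.length a c₁ := ⟨hstep_u, hle⟩
      have hreach₁ := hreach.tail hL
      by_cases hcase : c₁.2 ≤ u.length
      · exact ih.2 e hcase hreach₁
      · have hc1 : c₁.2 = u.length + 1 := by omega
        have hc1' : c₁ = (c₁.1, u.length + 1) := Prod.ext rfl hc1
        have hcross := hC e c₁.1 (by rw [← hc1']; exact hreach₁)
        obtain ⟨p', hacc⟩ := ih.1 (le_of_eq hc1.symm)
        refine ⟨p', Relation.ReflTransGen.trans hcross ?_⟩
        rw [← hc1']
        exact hacc

/-- Same crossing table and same length implies the same extension behaviour. -/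
lemma accepts_transfer (M : TwoNFA d) (u v y : List Bool) (hlen : u.length = v.length)
    (htab : crossTable M u = crossTable M v) (h : M.accepts (u ++ y)) :
    M.accepts (v ++ y) := by
  obtain ⟨p, hrun⟩ := h
  obtain ⟨p', h'⟩ := (transfer M u v y hlen htab hrun).2 none (Nat.zero_le _)
    Relation.ReflTransGen.refl
  exact ⟨p', h'⟩

lemma mem_transfer (L : Set (List Bool)) (M : TwoNFA d) (hM : M.Recognizes L)
    (u v y : List Bool) (hlen : u.length = v.length)
    (htab : crossTable M u = crossTable M v) : (u ++ y ∈ L) ↔ (v ++ y ∈ L) := by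
  rw [← hM, ← hM]
  exact ⟨accepts_transfer M u v y hlen htab,
    accepts_transfer M v u y hlen.symm htab.symm⟩

end Stmt3Aux

/-! ## STATEMENT 3 -/

theorem stmt3 (d : ℕ) (L : Set (List Bool)) (M : TwoNFA d) (hM : M.Recognizes L) :
    ∀ n : ℕ, Rn L n ≤ 2 ^ ((d + 1) ^ 2) := by
  intro n
  apply Finset.sup_le
  intro r _
  classical
  set F : ((Option (Fin d) → Fin d → Bool) × (Option (Fin d) → Bool)) →
      ({ y : List Bool // y.length = n - r } → Prop) :=
    fun τ => if h : ∃ u : List Bool, u.length = r ∧ Stmt3Aux.crossTable M u = τ then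
      (fun y => (h.choose ++ y.1) ∈ L) else (fun _ => True) with hF
  have hsub : { g : { y : List Bool // y.length = n - r } → Prop |
      ∃ u : List Bool, u.length = r ∧ g = fun y => (u ++ y.1) ∈ L } ⊆ Set.range F := by
    rintro g ⟨u, hu, rfl⟩
    refine ⟨Stmt3Aux.crossTable M u, ?_⟩
    have h : ∃ u' : List Bool, u'.length = r ∧
        Stmt3Aux.crossTable M u' = Stmt3Aux.crossTable M u := ⟨u, hu, rfl⟩
    rw [hF]
    simp only [dif_pos h]
    obtain ⟨hl, ht⟩ := h.choose_spec
    funext y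
    exact propext (Stmt3Aux.mem_transfer L M hM _ u y.1 (by rw [hl, hu]) ht)
  calc Rr L n r ≤ (Set.range F).ncard :=
        Set.ncard_le_ncard hsub (Set.finite_range F)
    _ ≤ Nat.card ((Option (Fin d) → Fin d → Bool) × (Option (Fin d) → Bool)) := by
        rw [← Set.ncard_univ, ← Set.image_univ]
        exact Set.ncard_image_le Set.finite_univ
    _ = 2 ^ ((d + 1) ^ 2) := by
        simp only [Nat.card_eq_fintype_card, Fintype.card_prod, Fintype.card_fun,
          Fintype.card_option, Fintype.card_fin, Fintype.card_bool]
        rw [← pow_mul, ← pow_add]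
        congr 1
        ring
end
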